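/- Let ε ∈ (0,1] and N ∈ ℕ. For Δ ∈ {ε, 2ε}, let μ_Δ be the product probability measure on {0,1}^N under which the N coordinates are i.i.d. Bernoulli with success probability p_Δ := 1/(2 + Δ/2). Then for every function β̂ : {0,1}^N → [0,1], max over Δ ∈ {ε, 2ε} of ∫ Exploit_Δ(q_{β̂(ω)}) dμ_Δ(ω) ≥ (ε/30)·exp(−N ε²/8). -/

import Mathlib

open MeasureTheory

/-- Exploitability of the column strategy `q` in the perturbed Matching Pennies game
with payoff matrix `[[1+Δ, −1], [−1, 1]]`:
`Exploit_Δ(q) := max{(2+Δ)q − 1, 1 − 2q} − v_Δ` with Nash value `v_Δ := (Δ/2)/(2+Δ/2)`. -/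
noncomputable def exploit (Δ q : ℝ) : ℝ :=
  max ((2 + Δ) * q - 1) (1 - 2 * q) - (Δ / 2) / (2 + Δ / 2)

/-- The interpolating family of column strategies:
`q_β := 1/2 − (2βε/(8+4ε) + (1−β)ε/(8+2ε))`. -/
noncomputable def qfam (ε β : ℝ) : ℝ :=
  1 / 2 - (2 * β * ε / (8 + 4 * ε) + (1 - β) * ε / (8 + 2 * ε))

/-- The product measure on `{0,1}^N` under which the `N` coordinates are i.i.d.
Bernoulli with success probability `p_Δ := 1/(2 + Δ/2)`, i.e. the law of `N` expert
action samples drawn from the Nash strategy of the game with parameter `Δ ≥ 0`. -/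
noncomputable def nashSampleLaw (N : ℕ) (Δ : ℝ) (hΔ : 0 ≤ Δ) : Measure (Fin N → Bool) :=
  Measure.pi fun _ =>
    (PMF.bernoulli (Real.toNNReal (1 / (2 + Δ / 2)))
      (by
        rw [Real.toNNReal_le_one, div_le_one (by linarith)]
        linarith)).toMeasure

set_option maxHeartbeats 1000000

instance (N : ℕ) (Δ : ℝ) (hΔ : 0 ≤ Δ) : IsProbabilityMeasure (nashSampleLaw N Δ hΔ) := by
  unfold nashSampleLaw; infer_instance

lemma nashSampleLaw_singleton (N : ℕ) (Δ : ℝ) (hΔ : 0 ≤ Δ) (p : ℝ)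
    (hp : p = 1 / (2 + Δ / 2)) (ω : Fin N → Bool) :
    (nashSampleLaw N Δ hΔ {ω}).toReal = ∏ i, (if ω i then p else 1 - p) := by
  have h2 : (0:ℝ) < 2 + Δ / 2 := by linarith
  have hp0 : (0:ℝ) ≤ p := by rw [hp]; positivity
  have hp1 : p ≤ 1 := by rw [hp, div_le_one h2]; linarith
  rw [nashSampleLaw, ← Set.univ_pi_singleton ω, Measure.pi_pi, ENNReal.toReal_prod]
  apply Finset.prod_congr rfl
  intro i _
  rw [PMF.toMeasure_apply_singleton _ _ (measurableSet_singleton _), PMF.bernoulli_apply, ← hp]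
  cases hωi : ω i
  · simp only [Bool.cond_false, ENNReal.coe_toReal]
    rw [NNReal.coe_sub (by rwa [Real.toNNReal_le_one]), Real.coe_toNNReal _ hp0]
    norm_num
  · simp only [Bool.cond_true, ENNReal.coe_toReal, Real.coe_toNNReal _ hp0]
    norm_num

lemma integral_nash (N : ℕ) (Δ : ℝ) (hΔ : 0 ≤ Δ) (f : (Fin N → Bool) → ℝ) :
    ∫ ω, f ω ∂(nashSampleLaw N Δ hΔ)
      = ∑ ω, (nashSampleLaw N Δ hΔ {ω}).toReal * f ω := by
  rw [integral_fintype (Integrable.of_finite)]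
  simp only [smul_eq_mul, measureReal_def]

lemma sum_pi_bool (N : ℕ) (h : Bool → ℝ) :
    ∑ ω : Fin N → Bool, ∏ i, h (ω i) = (h true + h false) ^ N := by
  induction N with
  | zero => simp
  | succ n ih =>
    rw [← Equiv.sum_comp (Fin.consEquiv fun _ => Bool) (fun ω => ∏ i, h (ω i)),
        Fintype.sum_prod_type]
    have key : ∀ (b : Bool) (ω : Fin n → Bool),
        (∏ i, h ((Fin.consEquiv fun _ => Bool) (b, ω) i)) = h b * ∏ i, h (ω i) := by
      intro b ω
      rw [show ((Fin.consEquiv fun _ => Bool) (b, ω)) = Fin.cons b ω from rfl,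
        Fin.prod_univ_succ]
      simp [Fin.cons_succ]
    simp_rw [key, ← Finset.mul_sum, ih, Fintype.sum_bool, pow_succ]
    ring

lemma harmonic_le_sqrt {a b : ℝ} (ha : 0 < a) (hb : 0 < b) :
    2 * (a * b) / (a + b) ≤ Real.sqrt (a * b) := by
  rw [Real.le_sqrt (by positivity) (by positivity)]
  rw [div_pow, div_le_iff₀ (by positivity)]
  nlinarith [sq_nonneg (a - b), sq_nonneg (a + b), mul_pos ha hb]

lemma exploit_bound1 (ε β : ℝ) (hε0 : 0 < ε) (hβ0 : 0 ≤ β) (hβ1 : β ≤ 1) :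
    2 * (1 - β) * (1 / (2 + ε / 2) - 1 / (2 + ε)) ≤ exploit (2 * ε) (qfam ε β) := by
  have key : (2 + 2 * ε) * (qfam ε β) - 1 - (2 * ε / 2) / (2 + (2 * ε) / 2)
      = (2 + 2 * ε) * ((1 - β) * (1 / (2 + ε / 2) - 1 / (2 + ε))) := by
    unfold qfam
    field_simp
    ring
  have hg0 : 0 ≤ (1 - β) * (1 / (2 + ε / 2) - 1 / (2 + ε)) := by
    apply mul_nonneg (by linarith)
    rw [sub_nonneg, div_le_div_iff₀ (by linarith) (by linarith)]
    linarith
  have h1 : 2 * (1 - β) * (1 / (2 + ε / 2) - 1 / (2 + ε))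
      ≤ (2 + 2 * ε) * (qfam ε β) - 1 - (2 * ε / 2) / (2 + (2 * ε) / 2) := by
    rw [key]; nlinarith
  unfold exploit
  have := le_max_left ((2 + 2 * ε) * qfam ε β - 1) (1 - 2 * qfam ε β)
  linarith

lemma exploit_bound2 (ε β : ℝ) (hε0 : 0 < ε) :
    2 * β * (1 / (2 + ε / 2) - 1 / (2 + ε)) ≤ exploit ε (qfam ε β) := by
  have key : 1 - 2 * (qfam ε β) - (ε / 2) / (2 + ε / 2)
      = 2 * β * (1 / (2 + ε / 2) - 1 / (2 + ε)) := by
    unfold qfam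
    field_simp
    ring
  unfold exploit
  have := le_max_right ((2 + ε) * qfam ε β - 1) (1 - 2 * qfam ε β)
  linarith

lemma rho_ge (ε : ℝ) (hε0 : 0 < ε) (hε1 : ε ≤ 1) :
    Real.exp (-(ε ^ 2 / 16)) ≤
      Real.sqrt ((1 / (2 + ε)) * (1 / (2 + ε / 2)))
        + Real.sqrt ((1 - 1 / (2 + ε)) * (1 - 1 / (2 + ε / 2))) := by
  set p1 : ℝ := 1 / (2 + ε) with hp1
  set p2 : ℝ := 1 / (2 + ε / 2) with hp2
  have h2ε : (0:ℝ) < 2 + ε := by linarith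
  have h2ε2 : (0:ℝ) < 2 + ε / 2 := by linarith
  have hp1pos : 0 < p1 := by positivity
  have hp2pos : 0 < p2 := by positivity
  have hq1pos : 0 < 1 - p1 := by
    rw [hp1, sub_pos, div_lt_one h2ε]; linarith
  have hq2pos : 0 < 1 - p2 := by
    rw [hp2, sub_pos, div_lt_one h2ε2]; linarith
  have hm1 := harmonic_le_sqrt hp1pos hp2pos
  have hm2 := harmonic_le_sqrt hq1pos hq2pos
  have e1 : 2 * (p1 * p2) / (p1 + p2) = 4 / (8 + 3 * ε) := by
    rw [div_eq_div_iff (by positivity) (by positivity), hp1, hp2]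
    field_simp
    ring
  have e2 : 2 * ((1 - p1) * (1 - p2)) / ((1 - p1) + (1 - p2))
      = (4 + 6 * ε + 2 * ε ^ 2) / (8 + 9 * ε + 2 * ε ^ 2) := by
    rw [div_eq_div_iff (by positivity) (by nlinarith), hp1, hp2]
    field_simp
    ring
  have hexp : Real.exp (-(ε ^ 2 / 16)) ≤ 1 / (1 + ε ^ 2 / 16) := by
    rw [Real.exp_neg, one_div]
    apply inv_anti₀ (by positivity)
    linarith [Real.add_one_le_exp (ε ^ 2 / 16)]
  have hrat : 1 / (1 + ε ^ 2 / 16)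
      ≤ 4 / (8 + 3 * ε) + (4 + 6 * ε + 2 * ε ^ 2) / (8 + 9 * ε + 2 * ε ^ 2) := by
    rw [div_add_div _ _ (by positivity) (by positivity),
      div_le_div_iff₀ (by positivity) (by positivity)]
    nlinarith [sq_nonneg ε, pow_pos hε0 3, pow_pos hε0 4, pow_pos hε0 5]
  calc Real.exp (-(ε ^ 2 / 16)) ≤ 1 / (1 + ε ^ 2 / 16) := hexp
    _ ≤ 4 / (8 + 3 * ε) + (4 + 6 * ε + 2 * ε ^ 2) / (8 + 9 * ε + 2 * ε ^ 2) := hrat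
    _ ≤ Real.sqrt (p1 * p2) + Real.sqrt ((1 - p1) * (1 - p2)) := by
        rw [← e1, ← e2]; exact add_le_add hm1 hm2

lemma main_aux (ε : ℝ) (hε0 : 0 < ε) (hε1 : ε ≤ 1) (N : ℕ)
    (βhat : (Fin N → Bool) → ℝ) (hβhat : ∀ ω, βhat ω ∈ Set.Icc (0 : ℝ) 1)
    (hd1 : 0 ≤ 2 * ε) (hd2 : 0 ≤ ε) :
    (ε / 30) * Real.exp (-(N * ε ^ 2) / 8) ≤
      max (∫ ω, exploit (2 * ε) (qfam ε (βhat ω)) ∂(nashSampleLaw N (2 * ε) hd1))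
        (∫ ω, exploit ε (qfam ε (βhat ω)) ∂(nashSampleLaw N ε hd2)) := by
  have h2ε : (0:ℝ) < 2 + ε := by linarith
  have h2ε2 : (0:ℝ) < 2 + ε / 2 := by linarith
  set p1 : ℝ := 1 / (2 + ε) with hp1
  set p2 : ℝ := 1 / (2 + ε / 2) with hp2
  set g : ℝ := p2 - p1 with hg
  have hp1pos : 0 < p1 := by positivity
  have hp2pos : 0 < p2 := by positivity
  have hp1le : p1 ≤ 1 := by rw [hp1, div_le_one h2ε]; linarith
  have hp2le : p2 ≤ 1 := by rw [hp2, div_le_one h2ε2]; linarith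
  have hg0 : 0 ≤ g := by
    rw [hg, sub_nonneg, hp1, hp2, div_le_div_iff₀ h2ε h2ε2]; linarith
  set f1 : Bool → ℝ := fun b => if b then p1 else 1 - p1 with hf1
  set f2 : Bool → ℝ := fun b => if b then p2 else 1 - p2 with hf2
  have hf1nn : ∀ b, 0 ≤ f1 b := by
    intro b; rw [hf1]; cases b <;> simp <;> linarith
  have hf2nn : ∀ b, 0 ≤ f2 b := by
    intro b; rw [hf2]; cases b <;> simp <;> linarith
  set a : (Fin N → Bool) → ℝ := fun ω => ∏ i, f1 (ω i) with haa
  set b : (Fin N → Bool) → ℝ := fun ω => ∏ i, f2 (ω i) with hbb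
  have hann : ∀ ω, 0 ≤ a ω := fun ω => Finset.prod_nonneg fun i _ => hf1nn (ω i)
  have hbnn : ∀ ω, 0 ≤ b ω := fun ω => Finset.prod_nonneg fun i _ => hf2nn (ω i)
  have hμ1 : ∀ ω, (nashSampleLaw N (2 * ε) hd1 {ω}).toReal = a ω := by
    intro ω
    rw [nashSampleLaw_singleton N (2 * ε) hd1 p1 (by rw [hp1]; norm_num) ω]
  have hμ2 : ∀ ω, (nashSampleLaw N ε hd2 {ω}).toReal = b ω := by
    intro ω
    rw [nashSampleLaw_singleton N ε hd2 p2 (by rw [hp2]) ω]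
  -- integral expansions and lower bounds
  have hI1 : ∑ ω, a ω * (2 * (1 - βhat ω) * g)
      ≤ ∫ ω, exploit (2 * ε) (qfam ε (βhat ω)) ∂(nashSampleLaw N (2 * ε) hd1) := by
    rw [integral_nash]
    apply Finset.sum_le_sum
    intro ω _
    rw [hμ1 ω]
    exact mul_le_mul_of_nonneg_left
      (by simpa [hg, hp1, hp2] using
        exploit_bound1 ε (βhat ω) hε0 (hβhat ω).1 (hβhat ω).2) (hann ω)
  have hI2 : ∑ ω, b ω * (2 * βhat ω * g)
      ≤ ∫ ω, exploit ε (qfam ε (βhat ω)) ∂(nashSampleLaw N ε hd2) := by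
    rw [integral_nash]
    apply Finset.sum_le_sum
    intro ω _
    rw [hμ2 ω]
    exact mul_le_mul_of_nonneg_left
      (by simpa [hg, hp1, hp2] using exploit_bound2 ε (βhat ω) hε0) (hbnn ω)
  -- minimum bound
  set m : (Fin N → Bool) → ℝ := fun ω => min (a ω) (b ω) with hm
  have hmnn : ∀ ω, 0 ≤ m ω := fun ω => le_min (hann ω) (hbnn ω)
  have hsum_min : 2 * g * ∑ ω, m ω
      ≤ (∑ ω, a ω * (2 * (1 - βhat ω) * g)) + ∑ ω, b ω * (2 * βhat ω * g) := by
    rw [Finset.mul_sum, ← Finset.sum_add_distrib]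
    apply Finset.sum_le_sum
    intro ω _
    have h1 : 0 ≤ (a ω - m ω) * (1 - βhat ω) :=
      mul_nonneg (by simp [hm, min_le_left]) (by linarith [(hβhat ω).2])
    have h2 : 0 ≤ (b ω - m ω) * βhat ω :=
      mul_nonneg (by simp [hm, min_le_right]) (hβhat ω).1
    nlinarith [mul_nonneg hg0 h1, mul_nonneg hg0 h2]
  -- Cauchy-Schwarz step
  have hsqrt_prod : ∀ ω, Real.sqrt (a ω * b ω) = ∏ i, Real.sqrt (f1 (ω i) * f2 (ω i)) := by
    intro ω
    have hnn : 0 ≤ ∏ i, Real.sqrt (f1 (ω i) * f2 (ω i)) :=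
      Finset.prod_nonneg fun i _ => Real.sqrt_nonneg _
    have hsq : (∏ i, Real.sqrt (f1 (ω i) * f2 (ω i))) ^ 2 = ∏ i, (f1 (ω i) * f2 (ω i)) := by
      rw [← Finset.prod_pow]
      exact Finset.prod_congr rfl fun i _ =>
        Real.sq_sqrt (mul_nonneg (hf1nn (ω i)) (hf2nn (ω i)))
    rw [haa, hbb, ← Finset.prod_mul_distrib, ← hsq, Real.sqrt_sq hnn]
  set ρ : ℝ := Real.sqrt (p1 * p2) + Real.sqrt ((1 - p1) * (1 - p2)) with hρdef
  have hS : ∑ ω, Real.sqrt (a ω * b ω) = ρ ^ N := by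
    simp_rw [hsqrt_prod]
    rw [sum_pi_bool N (fun bo => Real.sqrt (f1 bo * f2 bo))]
    rw [hρdef, hf1, hf2]
    norm_num
  have hsuma : ∑ ω, a ω = 1 := by
    rw [haa, sum_pi_bool N f1, hf1]
    norm_num
  have hsumb : ∑ ω, b ω = 1 := by
    rw [hbb, sum_pi_bool N f2, hf2]
    norm_num
  have hsummax : ∑ ω, max (a ω) (b ω) ≤ 2 := by
    calc ∑ ω, max (a ω) (b ω) ≤ ∑ ω, (a ω + b ω) := by
          apply Finset.sum_le_sum
          intro ω _
          exact max_le (by linarith [hbnn ω]) (by linarith [hann ω])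
      _ = 2 := by rw [Finset.sum_add_distrib, hsuma, hsumb]; norm_num
  have hCS : (∑ ω, Real.sqrt (a ω * b ω))
      ≤ Real.sqrt (∑ ω, m ω) * Real.sqrt (∑ ω, max (a ω) (b ω)) := by
    have key : ∀ ω : Fin N → Bool,
        Real.sqrt (a ω * b ω) = Real.sqrt (m ω) * Real.sqrt (max (a ω) (b ω)) := by
      intro ω
      rw [← Real.sqrt_mul (hmnn ω), hm, min_mul_max]
    simp_rw [key]
    exact Real.sum_sqrt_mul_sqrt_le _ (fun ω => hmnn ω) (fun ω => le_max_of_le_left (hann ω))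
  have hsm_nn : 0 ≤ ∑ ω, m ω := Finset.sum_nonneg fun ω _ => hmnn ω
  have hmax_nn : 0 ≤ ∑ ω, max (a ω) (b ω) :=
    Finset.sum_nonneg fun ω _ => le_max_of_le_left (hann ω)
  have hS2 : (ρ ^ N) ^ 2 ≤ 2 * ∑ ω, m ω := by
    have h1 : ((∑ ω, Real.sqrt (a ω * b ω))) ^ 2
        ≤ (∑ ω, m ω) * (∑ ω, max (a ω) (b ω)) := by
      calc ((∑ ω, Real.sqrt (a ω * b ω))) ^ 2
          ≤ (Real.sqrt (∑ ω, m ω) * Real.sqrt (∑ ω, max (a ω) (b ω))) ^ 2 := by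
            apply pow_le_pow_left₀ (Finset.sum_nonneg fun ω _ => Real.sqrt_nonneg _) hCS
        _ = (∑ ω, m ω) * (∑ ω, max (a ω) (b ω)) := by
            rw [mul_pow, Real.sq_sqrt hsm_nn, Real.sq_sqrt hmax_nn]
    rw [← hS]
    nlinarith [mul_le_mul_of_nonneg_left hsummax hsm_nn]
  -- exponential comparison
  have hρ_ge : Real.exp (-(ε ^ 2 / 16)) ≤ ρ := by
    rw [hρdef, hp1, hp2]
    exact rho_ge ε hε0 hε1
  have hexp_eq : Real.exp (-(↑N * ε ^ 2) / 8) = (Real.exp (-(ε ^ 2 / 16)) ^ N) ^ 2 := by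
    rw [← pow_mul, ← Real.exp_nat_mul]
    congr 1
    push_cast
    ring
  have hexp_le : Real.exp (-(↑N * ε ^ 2) / 8) ≤ (ρ ^ N) ^ 2 := by
    rw [hexp_eq]
    apply pow_le_pow_left₀ (pow_nonneg (Real.exp_nonneg _) N)
    exact pow_le_pow_left₀ (Real.exp_nonneg _) hρ_ge N
  -- g lower bound
  have hgε : ε / 15 ≤ g := by
    have hgval : g = (ε / 2) / ((2 + ε / 2) * (2 + ε)) := by
      rw [hg, hp1, hp2]
      field_simp
      ring
    rw [hgval, div_le_div_iff₀ (by norm_num) (by positivity)]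
    nlinarith
  -- final assembly
  have hfinal : (ε / 30) * Real.exp (-(↑N * ε ^ 2) / 8) ≤ g * ∑ ω, m ω := by
    have h1 : Real.exp (-(↑N * ε ^ 2) / 8) ≤ 2 * ∑ ω, m ω := le_trans hexp_le hS2
    have h2 : 0 ≤ Real.exp (-(↑N * ε ^ 2) / 8) := Real.exp_nonneg _
    calc (ε / 30) * Real.exp (-(↑N * ε ^ 2) / 8)
        = (ε / 15) * (Real.exp (-(↑N * ε ^ 2) / 8) / 2) := by ring
      _ ≤ g * (Real.exp (-(↑N * ε ^ 2) / 8) / 2) :=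
          mul_le_mul_of_nonneg_right hgε (by positivity)
      _ ≤ g * ∑ ω, m ω := mul_le_mul_of_nonneg_left (by linarith) hg0
  set I1 := ∫ ω, exploit (2 * ε) (qfam ε (βhat ω)) ∂(nashSampleLaw N (2 * ε) hd1) with hI1d
  set I2 := ∫ ω, exploit ε (qfam ε (βhat ω)) ∂(nashSampleLaw N ε hd2) with hI2d
  have hsum : 2 * ((ε / 30) * Real.exp (-(↑N * ε ^ 2) / 8)) ≤ I1 + I2 := by
    calc 2 * ((ε / 30) * Real.exp (-(↑N * ε ^ 2) / 8)) ≤ 2 * (g * ∑ ω, m ω) := by linarith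
      _ = 2 * g * ∑ ω, m ω := by ring
      _ ≤ (∑ ω, a ω * (2 * (1 - βhat ω) * g)) + ∑ ω, b ω * (2 * βhat ω * g) := hsum_min
      _ ≤ I1 + I2 := add_le_add hI1 hI2
  rcases le_total I1 I2 with h | h
  · rw [max_eq_right h]; linarith
  · rw [max_eq_left h]; linarith


/-- for ε ∈ (0,1], N ∈ ℕ and any estimator `β̂ : {0,1}^N → [0,1]`,
`max_{Δ ∈ {ε, 2ε}} ∫ Exploit_Δ(q_{β̂(ω)}) dμ_Δ(ω) ≥ (ε/30)·exp(−Nε²/8)`,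
where `μ_Δ` is the i.i.d. Bernoulli(`p_Δ`) product law on `{0,1}^N`. -/
theorem stmt_15 (ε : ℝ) (hε : ε ∈ Set.Ioc (0 : ℝ) 1) (N : ℕ)
    (βhat : (Fin N → Bool) → ℝ) (hβhat : ∀ ω, βhat ω ∈ Set.Icc (0 : ℝ) 1) :
    (ε / 30) * Real.exp (-(N * ε ^ 2) / 8) ≤
      max
        (∫ ω, exploit (2 * ε) (qfam ε (βhat ω))
          ∂(nashSampleLaw N (2 * ε) (by linarith [hε.1])))
        (∫ ω, exploit ε (qfam ε (βhat ω))
          ∂(nashSampleLaw N ε hε.1.le)) := by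
  exact main_aux ε hε.1 hε.2 N βhat hβhat _ _
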